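/- Every finite modular ortholattice is 2-distributive: for all x, x₀, x₁, x₂ in a finite modular ortholattice L, x ⊓ (x₀ ⊔ x₁ ⊔ x₂) = (x ⊓ (x₀ ⊔ x₁)) ⊔ (x ⊓ (x₀ ⊔ x₂)) ⊔ (x ⊓ (x₁ ⊔ x₂)). -/

import Mathlib

/-!
# The Friendship Theorem

## Definitions and Statement
- A `Friendship` graph is one in which any two distinct vertices have exactly one neighbor in common
- A `Politician`, at least in the context of this problem, is a vertex in a graph which is adjacent
  to every other vertex.
- The friendship theorem (Erdős, Rényi, Sós 1966) states that every finite friendship graph has a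
  politician.

## Proof outline
The proof revolves around the theory of adjacency matrices, although some steps could equivalently
be phrased in terms of counting walks.
- Assume `G` is a finite friendship graph.
- First we show that any two nonadjacent vertices have the same degree
- Assume for contradiction that `G` does not have a politician.
- Conclude from the last two points that `G` is `d`-regular for some `d : ℕ`.
- Show that `G` has `d ^ 2 - d + 1` vertices.
- By casework, show that if `d = 0, 1, 2`, then `G` has a politician.
- If `3 ≤ d`, let `p` be a prime factor of `d - 1`.
- If `A` is the adjacency matrix of `G` with entries in `ℤ/pℤ`, we show that `A ^ p` has trace `1`.
- This gives a contradiction, as `A` has trace `0`, and thus `A ^ p` has trace `0`.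

## References
- [P. Erdős, A. Rényi, V. Sós, *On A Problem of Graph Theory*][erdosrenyisos]
- [C. Huneke, *The Friendship Theorem*][huneke2002]

-/

open scoped Classical

namespace Theorems100

noncomputable section

open Finset SimpleGraph Matrix

universe u v

variable {V : Type u} {R : Type v} [Semiring R]

section FriendshipDef

variable (G : SimpleGraph V)

/-- This property of a graph is the hypothesis of the friendship theorem:
every pair of nonadjacent vertices has exactly one common friend,
a vertex to which both are adjacent.
-/
def Friendship [Fintype V] : Prop :=
  ∀ ⦃v w : V⦄, v ≠ w → Fintype.card (G.commonNeighbors v w) = 1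

/-- A politician is a vertex that is adjacent to all other vertices.
-/
def ExistsPolitician : Prop :=
  ∃ v : V, ∀ w : V, v ≠ w → G.Adj v w

end FriendshipDef

variable [Fintype V] {G : SimpleGraph V} {d : ℕ} (hG : Friendship G)

namespace Friendship

variable (R)

include hG in
/-- One characterization of a friendship graph is that there is exactly one walk of length 2
  between distinct vertices. These walks are counted in off-diagonal entries of the square of
  the adjacency matrix, so for a friendship graph, those entries are all 1. -/
theorem adjMatrix_sq_of_ne {v w : V} (hvw : v ≠ w) :
    (G.adjMatrix R ^ 2 : Matrix V V R) v w = 1 := by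
  rw [sq, ← Nat.cast_one, ← hG hvw]
  simp only [mul_adjMatrix_apply, neighborFinset_eq_filter, adjMatrix_apply,
    sum_boole, filter_filter, and_comm, commonNeighbors,
    Fintype.card_ofFinset (s := filter (fun x ↦ x ∈ G.neighborSet v ∩ G.neighborSet w) univ),
    Set.mem_inter_iff, mem_neighborSet]
  have h2 : #{x | G.Adj v x ∧ G.Adj w x} = Fintype.card (G.commonNeighbors v w) := by
    rw [Fintype.card_subtype]; congr 1
  exact congrArg Nat.cast h2

include hG in
/-- This calculation amounts to counting the number of length 3 walks between nonadjacent vertices.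
  We use it to show that nonadjacent vertices have equal degrees. -/
theorem adjMatrix_pow_three_of_not_adj {v w : V} (non_adj : ¬G.Adj v w) :
    (G.adjMatrix R ^ 3 : Matrix V V R) v w = degree G v := by
  rw [pow_succ', adjMatrix_mul_apply, degree, card_eq_sum_ones, Nat.cast_sum]
  apply sum_congr rfl
  intro x hx
  rw [adjMatrix_sq_of_ne _ hG, Nat.cast_one]
  rintro ⟨rfl⟩
  rw [mem_neighborFinset] at hx
  exact non_adj hx

variable {R}

include hG in
/-- As `v` and `w` not being adjacent implies
  `degree G v = ((G.adjMatrix R) ^ 3) v w` and `degree G w = ((G.adjMatrix R) ^ 3) v w`,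
  the degrees are equal if `((G.adjMatrix R) ^ 3) v w = ((G.adjMatrix R) ^ 3) w v`

  This is true as the adjacency matrix is symmetric. -/
theorem degree_eq_of_not_adj {v w : V} (hvw : ¬G.Adj v w) : degree G v = degree G w := by
  rw [← Nat.cast_id (G.degree v), ← Nat.cast_id (G.degree w),
    ← adjMatrix_pow_three_of_not_adj ℕ hG hvw,
    ← adjMatrix_pow_three_of_not_adj ℕ hG fun h => hvw (G.adj_symm h)]
  conv_lhs => rw [← transpose_adjMatrix]
  simp only [pow_succ _ 2, sq, ← transpose_mul, transpose_apply]
  simp only [mul_assoc]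

include hG in
/-- Let `A` be the adjacency matrix of a graph `G`.
  If `G` is a friendship graph, then all of the off-diagonal entries of `A^2` are 1.
  If `G` is `d`-regular, then all of the diagonal entries of `A^2` are `d`.
  Putting these together determines `A^2` exactly for a `d`-regular friendship graph. -/
theorem adjMatrix_sq_of_regular (hd : G.IsRegularOfDegree d) :
    G.adjMatrix R ^ 2 = of fun v w => if v = w then (d : R) else (1 : R) := by
  ext (v w); by_cases h : v = w
  · rw [h, sq, adjMatrix_mul_self_apply_self, hd]; simp
  · rw [adjMatrix_sq_of_ne R hG h, of_apply, if_neg h]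

include hG in
theorem adjMatrix_sq_mod_p_of_regular {p : ℕ} (dmod : (d : ZMod p) = 1)
    (hd : G.IsRegularOfDegree d) : G.adjMatrix (ZMod p) ^ 2 = of fun _ _ => 1 := by
  simp [adjMatrix_sq_of_regular hG hd, dmod]

section Nonempty

variable [Nonempty V]

include hG in
/-- If `G` is a friendship graph without a politician (a vertex adjacent to all others), then
  it is regular. We have shown that nonadjacent vertices of a friendship graph have the same degree,
  and if there isn't a politician, we can show this for adjacent vertices by finding a vertex
  neither is adjacent to, and then using transitivity. -/
theorem isRegularOf_not_existsPolitician (hG' : ¬ExistsPolitician G) :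
    ∃ d : ℕ, G.IsRegularOfDegree d := by
  have v := Classical.arbitrary V
  use G.degree v
  intro x
  by_cases hvx : G.Adj v x; swap; · exact (degree_eq_of_not_adj hG hvx).symm
  dsimp only [Theorems100.ExistsPolitician] at hG'
  push_neg at hG'
  rcases hG' v with ⟨w, hvw', hvw⟩
  rcases hG' x with ⟨y, hxy', hxy⟩
  by_cases hxw : G.Adj x w
  swap; · rw [degree_eq_of_not_adj hG hvw]; exact degree_eq_of_not_adj hG hxw
  rw [degree_eq_of_not_adj hG hxy]
  by_cases hvy : G.Adj v y
  swap; · exact (degree_eq_of_not_adj hG hvy).symm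
  rw [degree_eq_of_not_adj hG hvw]
  apply degree_eq_of_not_adj hG
  intro hcontra
  rcases Finset.card_eq_one.mp (hG hvw') with ⟨⟨a, ha⟩, h⟩
  have key : ∀ {x}, x ∈ G.commonNeighbors v w → x = a := by
    intro x hx
    have h' : ⟨x, hx⟩ ∈ (univ : Finset (G.commonNeighbors v w)) := mem_univ (Subtype.mk x hx)
    rw [h, mem_singleton] at h'
    injection h'
  apply hxy'
  rw [key ((mem_commonNeighbors G).mpr ⟨hvx, G.adj_symm hxw⟩),
    key ((mem_commonNeighbors G).mpr ⟨hvy, G.adj_symm hcontra⟩)]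

include hG in
/-- Let `A` be the adjacency matrix of a `d`-regular friendship graph, and let `v` be a vector
  all of whose components are `1`. Then `v` is an eigenvector of `A ^ 2`, and we can compute
  the eigenvalue to be `d * d`, or as `d + (Fintype.card V - 1)`, so those quantities must be equal.

  This essentially means that the graph has `d ^ 2 - d + 1` vertices. -/
theorem card_of_regular (hd : G.IsRegularOfDegree d) : d + (Fintype.card V - 1) = d * d := by
  have v := Classical.arbitrary V
  trans ((G.adjMatrix ℕ ^ 2) *ᵥ (fun _ => 1)) v
  · rw [adjMatrix_sq_of_regular hG hd, mulVec, dotProduct, ← insert_erase (mem_univ v)]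
    simp only [sum_insert, mul_one, if_true, Nat.cast_id, eq_self_iff_true, mem_erase, not_true,
      Ne, not_false_iff, add_right_inj, false_and, of_apply]
    rw [Finset.sum_const_nat, card_erase_of_mem (mem_univ v), mul_one]; · rfl
    intro x hx; simp [(ne_of_mem_erase hx).symm]
  · rw [sq, ← mulVec_mulVec]
    simp only [adjMatrix_mulVec_const_apply_of_regular hd, neighborFinset,
      card_neighborSet_eq_degree, hd v, Function.const_def, adjMatrix_mulVec_apply _ _ (mulVec _ _),
      mul_one, sum_const, Set.toFinset_card, smul_eq_mul, Nat.cast_id]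
    change ∑ _x ∈ (G.neighborSet v).toFinset, d = d * d
    rw [sum_const, Set.toFinset_card, card_neighborSet_eq_degree, hd v, smul_eq_mul]

include hG in
/-- The size of a `d`-regular friendship graph is `1 mod (d-1)`, and thus `1 mod p` for a
  factor `p ∣ d-1`. -/
theorem card_mod_p_of_regular {p : ℕ} (dmod : (d : ZMod p) = 1) (hd : G.IsRegularOfDegree d) :
    (Fintype.card V : ZMod p) = 1 := by
  have hpos : 0 < Fintype.card V := Fintype.card_pos_iff.mpr inferInstance
  rw [← Nat.succ_pred_eq_of_pos hpos, Nat.succ_eq_add_one, Nat.pred_eq_sub_one]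
  simp only [add_eq_right, Nat.cast_add, Nat.cast_one]
  have h := congr_arg (fun n : ℕ => (n : ZMod p)) (card_of_regular hG hd)
  revert h; simp [dmod]

end Nonempty

theorem adjMatrix_sq_mul_const_one_of_regular (hd : G.IsRegularOfDegree d) :
    G.adjMatrix R * of (fun _ _ => 1) = of (fun _ _ => (d : R)) := by
  ext x
  simp only [← hd x, degree, adjMatrix_mul_apply, sum_const, Nat.smul_one_eq_cast,
    of_apply]

theorem adjMatrix_mul_const_one_mod_p_of_regular {p : ℕ} (dmod : (d : ZMod p) = 1)
    (hd : G.IsRegularOfDegree d) :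
    G.adjMatrix (ZMod p) * of (fun _ _ => 1) = of (fun _ _ => 1) := by
  rw [adjMatrix_sq_mul_const_one_of_regular hd, dmod]

include hG in
/-- Modulo a factor of `d-1`, the square and all higher powers of the adjacency matrix
  of a `d`-regular friendship graph reduce to the matrix whose entries are all 1. -/
theorem adjMatrix_pow_mod_p_of_regular {p : ℕ} (dmod : (d : ZMod p) = 1)
    (hd : G.IsRegularOfDegree d) {k : ℕ} (hk : 2 ≤ k) :
    G.adjMatrix (ZMod p) ^ k = of (fun _ _ => 1) := by
  match k with
  | 0 | 1 => exfalso; linarith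
  | k + 2 =>
    induction' k with k hind
    · exact adjMatrix_sq_mod_p_of_regular hG dmod hd
    rw [pow_succ', hind (Nat.le_add_left 2 k)]
    exact adjMatrix_mul_const_one_mod_p_of_regular dmod hd

variable [Nonempty V]

include hG in
/-- This is the main proof. Assuming that `3 ≤ d`, we take `p` to be a prime factor of `d-1`.
  Then the `p`th power of the adjacency matrix of a `d`-regular friendship graph must have trace 1
  mod `p`, but we can also show that the trace must be the `p`th power of the trace of the original
  adjacency matrix, which is 0, a contradiction.
-/
theorem false_of_three_le_degree (hd : G.IsRegularOfDegree d) (h : 3 ≤ d) : False := by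
  -- get a prime factor of d - 1
  let p : ℕ := (d - 1).minFac
  have p_dvd_d_pred := (ZMod.natCast_eq_zero_iff _ _).mpr (d - 1).minFac_dvd
  have dpos : 1 ≤ d := by omega
  have d_cast : ↑(d - 1) = (d : ℤ) - 1 := by norm_cast
  haveI : Fact p.Prime := ⟨Nat.minFac_prime (by omega)⟩
  have hp2 : 2 ≤ p := (Fact.out (p := p.Prime)).two_le
  have dmod : (d : ZMod p) = 1 := by
    rw [← Nat.succ_pred_eq_of_pos dpos, Nat.succ_eq_add_one, Nat.pred_eq_sub_one]
    simp only [add_eq_right, Nat.cast_add, Nat.cast_one]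
    exact p_dvd_d_pred
  have Vmod := card_mod_p_of_regular hG dmod hd
  -- now we reduce to a trace calculation
  have := ZMod.trace_pow_card (G.adjMatrix (ZMod p))
  contrapose! this; clear this
  -- the trace is 0 mod p when computed one way
  rw [trace_adjMatrix, zero_pow this.out.ne_zero]
  -- but the trace is 1 mod p when computed the other way
  rw [adjMatrix_pow_mod_p_of_regular hG dmod hd hp2]
  dsimp only [Fintype.card] at Vmod
  simp only [Matrix.trace, Matrix.diag, mul_one, nsmul_eq_mul, LinearMap.coe_mk, sum_const,
    of_apply, Ne]
  rw [Vmod, ← Nat.cast_one (R := ZMod (Nat.minFac (d - 1))), ZMod.natCast_eq_zero_iff,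
    Nat.dvd_one, Nat.minFac_eq_one_iff]
  omega

include hG in
/-- If `d ≤ 1`, a `d`-regular friendship graph has at most one vertex, which is
  trivially a politician. -/
theorem existsPolitician_of_degree_le_one (hd : G.IsRegularOfDegree d) (hd1 : d ≤ 1) :
    ExistsPolitician G := by
  have sq : d * d = d := by interval_cases d <;> norm_num
  have h := card_of_regular hG hd
  rw [sq] at h
  have : Fintype.card V ≤ 1 := by
    cases hn : Fintype.card V with
    | zero => exact Nat.zero_le _
    | succ n => omega
  use Classical.arbitrary V
  intro w h; exfalso
  apply h
  apply Fintype.card_le_one_iff.mp this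

include hG in
/-- If `d = 2`, a `d`-regular friendship graph has 3 vertices, so it must be complete graph,
  and all the vertices are politicians. -/
theorem neighborFinset_eq_of_degree_eq_two (hd : G.IsRegularOfDegree 2) (v : V) :
    G.neighborFinset v = Finset.univ.erase v := by
  apply Finset.eq_of_subset_of_card_le
  · rw [Finset.subset_iff]
    intro x
    rw [mem_neighborFinset, Finset.mem_erase]
    exact fun h => ⟨(G.ne_of_adj h).symm, Finset.mem_univ _⟩
  convert_to 2 ≤ _
  · convert_to _ = Fintype.card V - 1
    · have hfr := card_of_regular hG hd
      omega
    · exact Finset.card_erase_of_mem (Finset.mem_univ _)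
  · dsimp only [IsRegularOfDegree, degree] at hd
    rw [hd]

include hG in
theorem existsPolitician_of_degree_eq_two (hd : G.IsRegularOfDegree 2) : ExistsPolitician G := by
  have v := Classical.arbitrary V
  use v
  intro w hvw
  rw [← mem_neighborFinset, neighborFinset_eq_of_degree_eq_two hG hd v, Finset.mem_erase]
  exact ⟨hvw.symm, Finset.mem_univ _⟩

include hG in
theorem existsPolitician_of_degree_le_two (hd : G.IsRegularOfDegree d) (h : d ≤ 2) :
    ExistsPolitician G := by
  interval_cases d
  iterate 2 apply existsPolitician_of_degree_le_one hG hd; norm_num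
  exact existsPolitician_of_degree_eq_two hG hd

end Friendship

include hG in
/-- **Friendship theorem**: We wish to show that a friendship graph has a politician (a vertex
  adjacent to all others). We proceed by contradiction, and assume the graph has no politician.
  We have already proven that a friendship graph with no politician is `d`-regular for some `d`,
  and now we do casework on `d`.
  If the degree is at most 2, we observe by casework that it has a politician anyway.
  If the degree is at least 3, the graph cannot exist. -/
theorem friendship_theorem [Nonempty V] : ExistsPolitician G := by
  by_contra npG
  rcases hG.isRegularOf_not_existsPolitician npG with ⟨d, dreg⟩
  cases' lt_or_ge d 3 with dle2 dge3
  · exact npG (hG.existsPolitician_of_degree_le_two dreg (Nat.lt_succ_iff.mp dle2))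
  · exact hG.false_of_three_le_degree dreg dge3

end

end Theorems100
namespace MOLAux

variable {L : Type*} [Lattice L] [BoundedOrder L] [IsModularLattice L]

/-- Exchange property for atoms in a modular lattice. -/
lemma exch {P Q w : L} (hP : IsAtom P) (hQ : Q ≤ P ⊔ w) (hQw : ¬ Q ≤ w) : P ≤ Q ⊔ w := by
  have h1 : (w ⊔ P) ⊓ (Q ⊔ w) = w ⊔ P ⊓ (Q ⊔ w) :=
    sup_inf_assoc_of_le P (le_sup_right : w ≤ Q ⊔ w)
  rcases (hP.le_iff.mp (inf_le_left : P ⊓ (Q ⊔ w) ≤ P)) with h | h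
  · exfalso
    apply hQw
    have hQle : Q ≤ (w ⊔ P) ⊓ (Q ⊔ w) := le_inf (by rw [sup_comm]; exact hQ) le_sup_left
    rw [h1, h, sup_bot_eq] at hQle
    exact hQle
  · have : P ≤ P ⊓ (Q ⊔ w) := le_of_eq h.symm
    exact this.trans inf_le_right

/-- Adjoining an atom not below `w` gives a cover. -/
lemma covBy_sup_atom {w r : L} (hr : IsAtom r) (hrw : ¬ r ≤ w) : w ⋖ w ⊔ r := by
  constructor
  · exact lt_of_le_of_ne le_sup_left (fun h => hrw (h ▸ le_sup_right))
  · intro z hwz hzv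
    have hz : z = w ⊔ r ⊓ z := by
      have h2 : (w ⊔ r) ⊓ z = w ⊔ r ⊓ z := sup_inf_assoc_of_le r hwz.le
      rw [inf_eq_right.mpr hzv.le] at h2
      exact h2
    rcases (hr.le_iff.mp (inf_le_left : r ⊓ z ≤ r)) with h | h
    · rw [h, sup_bot_eq] at hz; exact hwz.ne' hz
    · rw [h] at hz; exact hzv.ne hz

/-- A complement of a coatom (relative to `v`) is an atom. -/
lemma atom_of_compl_covBy {w v c : L} (hcov : w ⋖ v) (hinf : c ⊓ w = ⊥) (hsup : c ⊔ w = v) :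
    IsAtom c := by
  constructor
  · rintro rfl
    rw [bot_sup_eq] at hsup
    exact hcov.lt.ne hsup
  · intro d hd
    have hdc : (d ⊔ w) ⊓ c = d := by
      rw [sup_inf_assoc_of_le w hd.le, inf_comm w c, hinf, sup_bot_eq]
    have hcv : c ≤ v := hsup ▸ le_sup_left
    have h1 : w ≤ d ⊔ w := le_sup_right
    have h2 : d ⊔ w ≤ v := hsup ▸ sup_le_sup_right hd.le w
    rcases hcov.wcovBy.eq_or_eq h1 h2 with h | h
    · rw [h, inf_comm, hinf] at hdc; exact hdc.symm
    · rw [h, inf_eq_right.mpr hcv] at hdc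
      exact absurd hdc.symm hd.ne

end MOLAux
namespace MOLAux2

variable {L : Type*} [Lattice L] [BoundedOrder L] [IsModularLattice L] [Finite L]
    (compl : L → L)
    (h_le : ∀ a b : L, a ≤ b ↔ compl b ≤ compl a)
    (h_inv : ∀ a : L, compl (compl a) = a)
    (h_inf : ∀ a : L, a ⊓ compl a = ⊥)
    (h_sup : ∀ a : L, a ⊔ compl a = ⊤)

set_option linter.unusedSectionVars false
include h_le h_inv h_inf h_sup

lemma le_compl_swap {a b : L} (h : a ≤ compl b) : b ≤ compl a := by
  have := (h_le a (compl b)).mp h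
  rwa [h_inv] at this

/-- Relative complements: `compl u ⊓ e` complements `u` in `[⊥, e]`. -/
lemma rel_sup {u e : L} (hue : u ≤ e) : u ⊔ (compl u ⊓ e) = e := by
  rw [← sup_inf_assoc_of_le _ hue, h_sup, top_inf_eq]

lemma le_of_atoms_le {e f : L} (h : ∀ q : L, IsAtom q → q ≤ e → q ≤ f) : e ≤ f := by
  by_contra hef
  set s := e ⊓ f with hs
  set t := compl s ⊓ e with ht
  have hsup : s ⊔ t = e := rel_sup compl h_le h_inv h_inf h_sup inf_le_left
  have htne : t ≠ ⊥ := by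
    intro h0
    rw [h0, sup_bot_eq] at hsup
    exact hef (hsup ▸ (inf_le_right : e ⊓ f ≤ f))
  obtain ⟨q, hq, hqt⟩ := (IsAtomic.eq_bot_or_exists_atom_le t).resolve_left htne
  have hqe : q ≤ e := hqt.trans (inf_le_right)
  have hqs : q ≤ s := le_inf hqe (h q hq hqe)
  have : q ≤ (⊥ : L) := by
    have : q ≤ s ⊓ compl s := le_inf hqs (hqt.trans inf_le_left)
    rwa [h_inf] at this
  exact hq.1 (le_bot_iff.mp this)

lemma exists_atom_le {p a w : L} (hp : IsAtom p) (hpaw : p ≤ a ⊔ w) (hpw : ¬ p ≤ w) :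
    ∃ m : L, IsAtom m ∧ m ≤ a ∧ p ≤ m ⊔ w := by
  obtain ⟨m, -, hmem, hmin⟩ := exists_minimal_le_of_wellFoundedLT
    (fun z : L => z ≤ a ∧ p ≤ z ⊔ w) a ⟨le_rfl, hpaw⟩
  obtain ⟨hma, hpmw⟩ := hmem
  have hmne : m ≠ ⊥ := by rintro rfl; rw [bot_sup_eq] at hpmw; exact hpw hpmw
  -- m ≤ p ⊔ w
  have hmpw : m ≤ p ⊔ w := by
    set r := m ⊓ (p ⊔ w) with hr
    have h1 : (w ⊔ m) ⊓ (p ⊔ w) = w ⊔ r := sup_inf_assoc_of_le m (le_sup_right : w ≤ p ⊔ w)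
    have hpr : p ≤ r ⊔ w := by
      have : p ≤ (w ⊔ m) ⊓ (p ⊔ w) := le_inf (by rw [sup_comm]; exact hpmw) le_sup_left
      rw [h1, sup_comm] at this
      exact this
    have := hmin ⟨inf_le_left.trans hma, hpr⟩ inf_le_left
    calc m ≤ r := this
    _ ≤ p ⊔ w := inf_le_right
  -- m ⊓ w = ⊥
  have hmw : m ⊓ w = ⊥ := by
    set d := m ⊓ w with hd
    set m' := compl d ⊓ m with hm'
    have hdm : d ≤ m := inf_le_left
    have hsupm : d ⊔ m' = m := rel_sup compl h_le h_inv h_inf h_sup hdm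
    have hm'w : p ≤ m' ⊔ w := by
      have : m' ⊔ w = m ⊔ w := by
        rw [← hsupm]
        rw [sup_comm d m', sup_assoc]
        congr 1
        exact (sup_eq_right.mpr (inf_le_right : m ⊓ w ≤ w)).symm
      rw [this]
      exact hpmw
    have := hmin ⟨inf_le_right.trans hma, hm'w⟩ inf_le_right
    -- m ≤ m', so m ≤ compl d, so d ≤ ⊥
    have hmd : d ≤ compl d := hdm.trans (this.trans inf_le_left)
    have : d ≤ d ⊓ compl d := le_inf le_rfl hmd
    rw [h_inf] at this
    exact le_bot_iff.mp this
  obtain ⟨q, hq, hqm⟩ := (IsAtomic.eq_bot_or_exists_atom_le m).resolve_left hmne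
  have hqw : ¬ q ≤ w := by
    intro h
    exact hq.1 (le_bot_iff.mp (hmw ▸ le_inf hqm h))
  have hpq : p ≤ q ⊔ w := MOLAux.exch hp (hqm.trans hmpw) hqw
  have : m ≤ q := hmin ⟨hqm.trans hma, hpq⟩ hqm
  exact ⟨m, (le_antisymm hqm this) ▸ hq, hma, hpmw⟩


lemma atomClaim {p a b c : L} (hp : IsAtom p) (hpabc : p ≤ a ⊔ b ⊔ c)
    (hab : ¬ p ≤ a ⊔ b) (hac : ¬ p ≤ a ⊔ c) (hbc : ¬ p ≤ b ⊔ c) : False := by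
  classical
  -- Step 1: replace a, b, c by atoms
  obtain ⟨a₀, ha₀, ha₀a, hp1⟩ := exists_atom_le compl h_le h_inv h_inf h_sup hp
    (by rw [sup_assoc] at hpabc; exact hpabc) hbc
  obtain ⟨b₀, hb₀, hb₀b, hp2⟩ := exists_atom_le compl h_le h_inv h_inf h_sup hp
    (show p ≤ b ⊔ (a₀ ⊔ c) by rw [sup_left_comm]; exact hp1)
    (fun h => hac (h.trans (sup_le_sup_right ha₀a c)))
  obtain ⟨c₀, hc₀, hc₀c, hp3⟩ := exists_atom_le compl h_le h_inv h_inf h_sup hp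
    (show p ≤ c ⊔ (a₀ ⊔ b₀) by
      have hrw : b₀ ⊔ (a₀ ⊔ c) = c ⊔ (a₀ ⊔ b₀) := by ac_rfl
      rwa [hrw] at hp2)
    (fun h => hab (h.trans (sup_le_sup ha₀a hb₀b)))
  set v := a₀ ⊔ b₀ ⊔ c₀ with hv
  have hpv : p ≤ v := by
    rw [hv, sup_comm (a₀ ⊔ b₀) c₀]
    exact hp3
  have hav : a₀ ≤ v := le_sup_of_le_left le_sup_left
  have hbv : b₀ ≤ v := le_sup_of_le_left le_sup_right
  have hcv : c₀ ≤ v := le_sup_right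
  have hpab : ¬ p ≤ a₀ ⊔ b₀ := fun h => hab (h.trans (sup_le_sup ha₀a hb₀b))
  have hpac : ¬ p ≤ a₀ ⊔ c₀ := fun h => hac (h.trans (sup_le_sup ha₀a hc₀c))
  have hpbc : ¬ p ≤ b₀ ⊔ c₀ := fun h => hbc (h.trans (sup_le_sup hb₀b hc₀c))
  -- nondegeneracy
  have hcab : ¬ c₀ ≤ a₀ ⊔ b₀ := fun h => hpab (hpv.trans (sup_le le_rfl h))
  have habc : ¬ a₀ ≤ b₀ ⊔ c₀ := fun h => hpbc (hpv.trans
    (by rw [hv, sup_assoc]; exact sup_le h le_rfl))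
  have hbac : ¬ b₀ ≤ a₀ ⊔ c₀ := fun h => hpac (hpv.trans
    (by rw [hv]; exact sup_le (sup_le le_sup_left h) le_sup_right))
  have hab0 : a₀ ≠ b₀ := fun h => habc (h ▸ le_sup_left)
  have hac0 : a₀ ≠ c₀ := fun h => habc (h ▸ le_sup_right)
  have hbc0 : b₀ ≠ c₀ := fun h => hbac (h ▸ le_sup_right)
  have hpa0 : p ≠ a₀ := fun h => hpab (h ▸ le_sup_left)
  have hpb0 : p ≠ b₀ := fun h => hpab (h ▸ le_sup_right)
  have hpc0 : p ≠ c₀ := fun h => hpac (h ▸ le_sup_right)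
  -- span: every atom of v can replace one generator
  have span : ∀ P : L, IsAtom P → P ≤ v →
      ∃ s t : L, IsAtom s ∧ IsAtom t ∧ s ≤ v ∧ t ≤ v ∧ v = P ⊔ s ⊔ t := by
    intro P hP hPv
    by_cases h1 : P ≤ b₀ ⊔ c₀
    · by_cases h2 : P ≤ c₀
      · have hPc : P = c₀ := (hc₀.le_iff.mp h2).resolve_left hP.1
        exact ⟨a₀, b₀, ha₀, hb₀, hav, hbv, by rw [hPc, hv]; ac_rfl⟩
      · have hb : b₀ ≤ P ⊔ c₀ := MOLAux.exch hb₀ h1 h2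
        refine ⟨a₀, c₀, ha₀, hc₀, hav, hcv, le_antisymm ?_ (sup_le (sup_le hPv hav) hcv)⟩
        rw [hv]
        refine sup_le (sup_le ?_ ?_) ?_
        · exact le_sup_of_le_left le_sup_right
        · exact hb.trans (sup_le (le_sup_of_le_left le_sup_left) le_sup_right)
        · exact le_sup_right
    · have ha : a₀ ≤ P ⊔ (b₀ ⊔ c₀) := MOLAux.exch ha₀
        (by rw [hv, sup_assoc] at hPv; exact hPv) h1
      refine ⟨b₀, c₀, hb₀, hc₀, hbv, hcv, le_antisymm ?_ (sup_le (sup_le hPv hbv) hcv)⟩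
      rw [hv]
      exact sup_le (sup_le (ha.trans (le_of_eq (by ac_rfl))) (le_sup_of_le_left le_sup_right))
        le_sup_right
  -- no two atoms of v join to v
  have pairNe : ∀ P Q : L, IsAtom P → IsAtom Q → P ≤ v → Q ≤ v → P ≠ Q → P ⊔ Q ≠ v := by
    intro P Q hP hQ hPv hQv hPQ heq
    by_cases h1 : a₀ ≤ Q
    · have haQ : a₀ = Q := (hQ.le_iff.mp h1).resolve_left ha₀.1
      have hb1 : b₀ ≤ P ⊔ a₀ := by rw [haQ]; exact heq ▸ hbv
      have hba : ¬ b₀ ≤ a₀ := fun h => hab0.symm ((ha₀.le_iff.mp h).resolve_left hb₀.1)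
      have hPba : P ≤ b₀ ⊔ a₀ := MOLAux.exch hP hb1 hba
      apply hpab
      have : v ≤ a₀ ⊔ b₀ := by
        rw [← heq, ← haQ]
        exact sup_le (hPba.trans (sup_le le_sup_right le_sup_left)) le_sup_left
      exact hpv.trans this
    · have ha1 : a₀ ≤ P ⊔ Q := heq ▸ hav
      have hPaQ : P ≤ a₀ ⊔ Q := MOLAux.exch hP ha1 h1
      have hvaQ : v ≤ a₀ ⊔ Q := by
        rw [← heq]
        exact sup_le hPaQ le_sup_right
      have hb1 : b₀ ≤ Q ⊔ a₀ := (hbv.trans hvaQ).trans (le_of_eq (sup_comm _ _))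
      have hba : ¬ b₀ ≤ a₀ := fun h => hab0.symm ((ha₀.le_iff.mp h).resolve_left hb₀.1)
      have hQba : Q ≤ b₀ ⊔ a₀ := MOLAux.exch hQ hb1 hba
      apply hpab
      refine hpv.trans (hvaQ.trans ?_)
      exact sup_le le_sup_left (hQba.trans (sup_le le_sup_right le_sup_left))
  -- the join of two distinct atoms of v is covered by v
  have pairCov : ∀ P Q : L, IsAtom P → IsAtom Q → P ≤ v → Q ≤ v → P ≠ Q → P ⊔ Q ⋖ v := by
    intro P Q hP hQ hPv hQv hPQ
    obtain ⟨s, t, hs, ht, hsv, htv, hvst⟩ := span P hP hPv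
    have key : ∃ u : L, IsAtom u ∧ v = P ⊔ Q ⊔ u := by
      by_cases hQt : Q ≤ P ⊔ t
      · by_cases hQs : Q ≤ P ⊔ s
        · exfalso
          have hQint : Q ≤ P ⊔ t ⊓ (P ⊔ s) := by
            have := sup_inf_assoc_of_le t (le_sup_left : P ≤ P ⊔ s)
            rw [← this]
            exact le_inf hQt hQs
          rcases (ht.le_iff.mp (inf_le_left : t ⊓ (P ⊔ s) ≤ t)) with h | h
          · rw [h, sup_bot_eq] at hQint
            exact hPQ.symm ((hP.le_iff.mp hQint).resolve_left hQ.1)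
          · have htPs : t ≤ P ⊔ s := h ▸ inf_le_right
            have hvPs : v = P ⊔ s := le_antisymm
              (by rw [hvst]; exact sup_le le_rfl htPs)
              (sup_le hPv hsv)
            have hQP : ¬ Q ≤ P := fun hh => hPQ.symm ((hP.le_iff.mp hh).resolve_left hQ.1)
            have hsQP : s ≤ Q ⊔ P := MOLAux.exch hs (by rw [sup_comm]; exact hvPs ▸ hQv) hQP
            exact pairNe P Q hP hQ hPv hQv hPQ (le_antisymm (sup_le hPv hQv) (by rw [hvPs]; exact sup_le le_sup_left (hsQP.trans (sup_le le_sup_right le_sup_left))))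
        · have hQ1 : Q ≤ t ⊔ (P ⊔ s) := by
            have := hQv
            rw [hvst, sup_comm] at this
            exact this
          have ht1 : t ≤ Q ⊔ (P ⊔ s) := MOLAux.exch ht hQ1 hQs
          refine ⟨s, hs, le_antisymm ?_ (sup_le (sup_le hPv hQv) hsv)⟩
          rw [hvst]
          refine sup_le (sup_le ?_ ?_) ?_
          · exact le_sup_of_le_left le_sup_left
          · exact le_sup_right
          · exact ht1.trans (sup_le (le_sup_of_le_left le_sup_right)
              (sup_le (le_sup_of_le_left le_sup_left) le_sup_right))
      · have hQ1 : Q ≤ s ⊔ (P ⊔ t) := by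
          have := hQv
          rw [hvst, sup_assoc, sup_left_comm] at this
          exact this
        have hs1 : s ≤ Q ⊔ (P ⊔ t) := MOLAux.exch hs hQ1 hQt
        refine ⟨t, ht, le_antisymm ?_ (sup_le (sup_le hPv hQv) htv)⟩
        rw [hvst]
        refine sup_le (sup_le ?_ ?_) ?_
        · exact le_sup_of_le_left le_sup_left
        · exact hs1.trans (sup_le (le_sup_of_le_left le_sup_right)
            (sup_le (le_sup_of_le_left le_sup_left) le_sup_right))
        · exact le_sup_right
    obtain ⟨u, hu, hvu⟩ := key
    have huPQ : ¬ u ≤ P ⊔ Q := fun h =>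
      pairNe P Q hP hQ hPv hQv hPQ (le_antisymm (sup_le hPv hQv)
        (by rw [hvu]; exact sup_le le_rfl h))
    have := MOLAux.covBy_sup_atom hu huPQ
    rwa [← hvu] at this
  -- Build the polarity graph on atoms of `v` and apply the friendship theorem
  let Vt := {w : L // IsAtom w ∧ w ≤ v}
  haveI : Fintype Vt := Fintype.ofFinite Vt
  haveI : Nonempty Vt := ⟨⟨p, hp, hpv⟩⟩
  let G : SimpleGraph Vt :=
    { Adj := fun A B => (A : L) ≤ compl (B : L)
      symm := ⟨fun A B h => le_compl_swap compl h_le h_inv h_inf h_sup h⟩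
      loopless := ⟨fun A h => A.2.1.1 (le_bot_iff.mp
        (by rw [← h_inf (A : L)]; exact le_inf le_rfl h))⟩ }
  have hAdj : ∀ A B : Vt, G.Adj A B ↔ (A : L) ≤ compl (B : L) := fun A B => Iff.rfl
  have hG : Theorems100.Friendship G := by
    intro A B hAB
    rw [Fintype.card_eq_one_iff]
    have hABne : (A : L) ≠ (B : L) := fun h => hAB (Subtype.ext h)
    have hPQv : (A : L) ⊔ (B : L) ≤ v := sup_le A.2.2 B.2.2
    have hcov : (A : L) ⊔ (B : L) ⋖ v := pairCov _ _ A.2.1 B.2.1 A.2.2 B.2.2 hABne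
    set C := compl ((A : L) ⊔ (B : L)) ⊓ v with hC
    have hCsup : ((A : L) ⊔ (B : L)) ⊔ C = v :=
      rel_sup compl h_le h_inv h_inf h_sup hPQv
    have hCinf : C ⊓ ((A : L) ⊔ (B : L)) = ⊥ := by
      have h1 : C ⊓ ((A : L) ⊔ (B : L)) ≤ ((A : L) ⊔ (B : L)) ⊓ compl ((A : L) ⊔ (B : L)) :=
        le_inf inf_le_right (inf_le_left.trans inf_le_left)
      rw [h_inf] at h1
      exact le_bot_iff.mp h1
    have hCatom : IsAtom C := MOLAux.atom_of_compl_covBy hcov hCinf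
      (by rw [sup_comm]; exact hCsup)
    have hCv : C ≤ v := inf_le_right
    have hCA : C ≤ compl (A : L) := inf_le_left.trans ((h_le _ _).mp le_sup_left)
    have hCB : C ≤ compl (B : L) := inf_le_left.trans ((h_le _ _).mp le_sup_right)
    refine ⟨⟨⟨C, hCatom, hCv⟩, ?_⟩, ?_⟩
    · rw [SimpleGraph.mem_commonNeighbors]
      exact ⟨le_compl_swap compl h_le h_inv h_inf h_sup hCA,
        le_compl_swap compl h_le h_inv h_inf h_sup hCB⟩
    · rintro ⟨⟨R, hR, hRv⟩, hRmem⟩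
      rw [SimpleGraph.mem_commonNeighbors] at hRmem
      obtain ⟨h1, h2⟩ := hRmem
      have hRA : R ≤ compl (A : L) := le_compl_swap compl h_le h_inv h_inf h_sup h1
      have hRB : R ≤ compl (B : L) := le_compl_swap compl h_le h_inv h_inf h_sup h2
      have hRAB : R ≤ compl ((A : L) ⊔ (B : L)) :=
        le_compl_swap compl h_le h_inv h_inf h_sup
          (sup_le (le_compl_swap compl h_le h_inv h_inf h_sup hRA)
            (le_compl_swap compl h_le h_inv h_inf h_sup hRB))
      have hRC : R ≤ C := le_inf hRAB hRv
      have : R = C := (hCatom.le_iff.mp hRC).resolve_left hR.1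
      exact Subtype.ext (Subtype.ext this)
  obtain ⟨z, hz⟩ := Theorems100.friendship_theorem hG
  have hzmaj : ∀ w : L, IsAtom w → w ≤ v → w ≠ (z : L) → w ≤ compl (z : L) := by
    intro w hw hwv hwz
    have hadj := hz ⟨w, hw, hwv⟩ (fun h => hwz (congrArg Subtype.val h).symm)
    exact le_compl_swap compl h_le h_inv h_inf h_sup hadj
  -- three atoms among a₀, b₀, c₀, p, all distinct from z, join to v
  have join3 : ∀ w1 w2 : L, IsAtom w1 → IsAtom w2 → w1 ≤ v → w2 ≤ v → w1 ≠ w2 →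
      ¬ p ≤ w1 ⊔ w2 → w1 ⊔ w2 ⊔ p = v := by
    intro w1 w2 hw1 hw2 hv1 hv2 hne hnp
    have hcov := pairCov w1 w2 hw1 hw2 hv1 hv2 hne
    rcases hcov.wcovBy.eq_or_eq (le_sup_left : w1 ⊔ w2 ≤ w1 ⊔ w2 ⊔ p)
      (sup_le (sup_le hv1 hv2) hpv) with h | h
    · exact absurd (h ▸ le_sup_right) hnp
    · exact h
  have hvz : v ≤ compl (z : L) := by
    by_cases h1 : (z : L) = a₀
    · refine (le_of_eq (join3 b₀ c₀ hb₀ hc₀ hbv hcv hbc0 hpbc).symm).trans ?_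
      exact sup_le (sup_le (hzmaj b₀ hb₀ hbv (h1 ▸ hab0.symm))
        (hzmaj c₀ hc₀ hcv (h1 ▸ hac0.symm))) (hzmaj p hp hpv (h1 ▸ hpa0))
    · by_cases h2 : (z : L) = b₀
      · refine (le_of_eq (join3 a₀ c₀ ha₀ hc₀ hav hcv hac0 hpac).symm).trans ?_
        exact sup_le (sup_le (hzmaj a₀ ha₀ hav (h2 ▸ hab0))
          (hzmaj c₀ hc₀ hcv (h2 ▸ hbc0.symm))) (hzmaj p hp hpv (h2 ▸ hpb0))
      · by_cases h3 : (z : L) = c₀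
        · refine (le_of_eq (join3 a₀ b₀ ha₀ hb₀ hav hbv hab0 hpab).symm).trans ?_
          exact sup_le (sup_le (hzmaj a₀ ha₀ hav (h3 ▸ hac0))
            (hzmaj b₀ hb₀ hbv (h3 ▸ hbc0))) (hzmaj p hp hpv (h3 ▸ hpc0))
        · refine (le_of_eq hv).trans ?_
          exact sup_le (sup_le (hzmaj a₀ ha₀ hav (fun h => h1 h.symm))
            (hzmaj b₀ hb₀ hbv (fun h => h2 h.symm))) (hzmaj c₀ hc₀ hcv (fun h => h3 h.symm))
  have hzv : (z : L) ≤ compl (z : L) := z.2.2.trans hvz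
  exact z.2.1.1 (le_bot_iff.mp (by rw [← h_inf (z : L)]; exact le_inf le_rfl hzv))

end MOLAux2

theorem stmt_15 {L : Type*} [Lattice L] [BoundedOrder L] [IsModularLattice L] [Finite L]
    (compl : L → L)
    (h_le : ∀ a b : L, a ≤ b ↔ compl b ≤ compl a)
    (h_inv : ∀ a : L, compl (compl a) = a)
    (h_inf : ∀ a : L, a ⊓ compl a = ⊥)
    (h_sup : ∀ a : L, a ⊔ compl a = ⊤)
    (x x0 x1 x2 : L) :
    x ⊓ (x0 ⊔ x1 ⊔ x2) = (x ⊓ (x0 ⊔ x1)) ⊔ (x ⊓ (x0 ⊔ x2)) ⊔ (x ⊓ (x1 ⊔ x2)) := by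
  refine le_antisymm ?_ (sup_le (sup_le
    (inf_le_inf_left x le_sup_left)
    (inf_le_inf_left x (sup_le (le_sup_of_le_left le_sup_left) le_sup_right)))
    (inf_le_inf_left x (sup_le (le_sup_of_le_left le_sup_right) le_sup_right)))
  refine MOLAux2.le_of_atoms_le compl h_le h_inv h_inf h_sup ?_
  intro q hq hqle
  have hqx : q ≤ x := hqle.trans inf_le_left
  have hq012 : q ≤ x0 ⊔ x1 ⊔ x2 := hqle.trans inf_le_right
  by_cases h01 : q ≤ x0 ⊔ x1
  · exact le_sup_of_le_left (le_sup_of_le_left (le_inf hqx h01))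
  by_cases h02 : q ≤ x0 ⊔ x2
  · exact le_sup_of_le_left (le_sup_of_le_right (le_inf hqx h02))
  by_cases h12 : q ≤ x1 ⊔ x2
  · exact le_sup_of_le_right (le_inf hqx h12)
  exact absurd (MOLAux2.atomClaim compl h_le h_inv h_inf h_sup hq hq012 h01 h02 h12) id
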